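/- Suppose B is a read-once branching program of size s on Boolean variables that solves the conflict clause search problem for an unsatisfiable CNF formula φ (every full assignment is routed to a leaf labeled by a clause of φ falsified by that assignment). Then there exists a regular resolution refutation of φ of size at most s. -/

import Mathlib

/-- A clause: a finite set of literals, a literal being a variable (in ℕ) with a polarity. -/
abbrev Clause := Finset (ℕ × Bool)

/-- A CNF formula: a finite set of clauses. -/
abbrev CNF := Finset Clause

/-- An assignment falsifies a clause if it makes every literal in it false. -/
def Falsifies (σ : ℕ → Bool) (C : Clause) : Prop := ∀ l ∈ C, σ l.1 ≠ l.2

/-- A CNF formula is unsatisfiable if every assignment falsifies some clause. -/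
def Unsat (φ : CNF) : Prop := ∀ σ : ℕ → Bool, ∃ C ∈ φ, Falsifies σ C

/-- A branching program of size `s`: a DAG (nodes topologically indexed by `Fin s`)
with a unique source; each internal node queries a variable and has a 0- and a 1-edge;
each leaf is labeled by a clause. -/
structure BranchingProgram (s : ℕ) where
  source : Fin s
  isLeaf : Fin s → Bool
  leafClause : Fin s → Clause
  var : Fin s → ℕ
  next : Fin s → Bool → Fin s
  acyclic : ∀ v b, isLeaf v = false → v < next v b

namespace BranchingProgram

variable {s : ℕ} (B : BranchingProgram s)

/-- One step of computation on assignment `σ` (leaves are fixed points). -/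
def step (σ : ℕ → Bool) (v : Fin s) : Fin s :=
  if B.isLeaf v then v else B.next v (σ (B.var v))

/-- The leaf reached by following `σ` from the source. -/
def run (σ : ℕ → Bool) : Fin s := (B.step σ)^[s] B.source

/-- `l` is a path in the DAG starting at the source. -/
def IsSourcePath (l : List (Fin s)) : Prop :=
  l.head? = some B.source ∧
    List.Chain' (fun u v => B.isLeaf u = false ∧ ∃ b, v = B.next u b) l

/-- Read-once: no variable is queried twice along any source-to-leaf path. -/
def ReadOnce : Prop :=
  ∀ l : List (Fin s), B.IsSourcePath l →
    ((l.filter (fun v => !B.isLeaf v)).map B.var).Nodup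

/-- An OBDD: the variables queried along every path are consistent with a
single total order of the variables. -/
def IsOBDD : Prop :=
  ∃ ord : ℕ → ℕ, Function.Injective ord ∧
    ∀ l : List (Fin s), B.IsSourcePath l →
      ((l.filter (fun v => !B.isLeaf v)).map (fun v => ord (B.var v))).Pairwise (· < ·)

/-- `B` solves the conflict clause search problem for `φ`: every assignment is routed
to a leaf labeled by a clause of `φ` that it falsifies. -/
def SolvesSearch (φ : CNF) : Prop :=
  ∀ σ : ℕ → Bool,
    B.isLeaf (B.run σ) = true ∧ B.leafClause (B.run σ) ∈ φ ∧
      Falsifies σ (B.leafClause (B.run σ))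

end BranchingProgram

/-- A resolution refutation of `φ`, as a DAG of clauses (topologically indexed):
each line is an axiom (clause of `φ`) or is obtained by resolving two earlier
lines on a variable, and some line is the empty clause. -/
structure ResRefutation (φ : CNF) where
  size : ℕ
  clause : Fin size → Clause
  isAx : Fin size → Bool
  prem1 : Fin size → Fin size
  prem2 : Fin size → Fin size
  resVar : Fin size → ℕ
  ax_mem : ∀ i, isAx i = true → clause i ∈ φ
  prem1_lt : ∀ i, isAx i = false → prem1 i < i
  prem2_lt : ∀ i, isAx i = false → prem2 i < i
  res_pos : ∀ i, isAx i = false → (resVar i, true) ∈ clause (prem1 i)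
  res_neg : ∀ i, isAx i = false → (resVar i, false) ∈ clause (prem2 i)
  res_eq : ∀ i, isAx i = false →
    clause i =
      (clause (prem1 i)).erase (resVar i, true) ∪ (clause (prem2 i)).erase (resVar i, false)
  refutes : ∃ i, clause i = ∅

namespace ResRefutation

variable {φ : CNF} (R : ResRefutation φ)

/-- `l` is a path in the proof DAG (from a clause towards the axioms used to derive it). -/
def IsPath (l : List (Fin R.size)) : Prop :=
  List.Chain' (fun u v => R.isAx u = false ∧ (v = R.prem1 u ∨ v = R.prem2 u)) l

/-- Regular: no variable is resolved on more than once along any path of the proof DAG. -/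
def Regular : Prop :=
  ∀ l : List (Fin R.size), R.IsPath l →
    ((l.filter (fun v => !R.isAx v)).map R.resVar).Nodup

/-- Ordered: the resolved variables along every path of the proof DAG are consistent
with a single total order of the variables. -/
def Ordered : Prop :=
  ∃ ord : ℕ → ℕ, Function.Injective ord ∧
    ∀ l : List (Fin R.size), R.IsPath l →
      ((l.filter (fun v => !R.isAx v)).map (fun v => ord (R.resVar v))).Pairwise (· < ·)

end ResRefutation

namespace BPaux

variable {s : ℕ} (B : BranchingProgram s)

/-- edge relation -/
def E (u w : Fin s) : Prop := B.isLeaf u = false ∧ ∃ b, w = B.next u b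

lemma acy (v : Fin s) (b : Bool) (h : ¬ B.isLeaf v = true) : s - (B.next v b : ℕ) < s - (v : ℕ) := by
  have := B.acyclic v b (by simpa using h)
  have h2 := (B.next v b).isLt
  omega

/-- the clause attached to node `v` -/
def D (v : Fin s) : Clause :=
  if h : B.isLeaf v = true then B.leafClause v
  else
    let D0 := D (B.next v false)
    let D1 := D (B.next v true)
    if (B.var v, true) ∈ D0 then
      if (B.var v, false) ∈ D1 then (D0.erase (B.var v, true)) ∪ (D1.erase (B.var v, false))
      else D1
    else D0
termination_by s - v
decreasing_by all_goals exact acy B v _ h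

/-- the node whose line node `v`'s line copies -/
def t (v : Fin s) : Fin s :=
  if h : B.isLeaf v = true then v
  else
    if (B.var v, true) ∈ D B (B.next v false) then
      if (B.var v, false) ∈ D B (B.next v true) then v
      else t (B.next v true)
    else t (B.next v false)
termination_by s - v
decreasing_by all_goals exact acy B v _ h

lemma D_leaf {v : Fin s} (h : B.isLeaf v = true) : D B v = B.leafClause v := by
  rw [D]; simp [h]

lemma t_leaf {v : Fin s} (h : B.isLeaf v = true) : t B v = v := by
  rw [t]; simp [h]

lemma D_res {v : Fin s} (h : B.isLeaf v = false)
    (h1 : (B.var v, true) ∈ D B (B.next v false))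
    (h2 : (B.var v, false) ∈ D B (B.next v true)) :
    D B v = (D B (B.next v false)).erase (B.var v, true) ∪
      (D B (B.next v true)).erase (B.var v, false) := by
  rw [D, dif_neg (by simp [h] : ¬ B.isLeaf v = true)]
  rw [if_pos h1, if_pos h2]

lemma t_res {v : Fin s} (h : B.isLeaf v = false)
    (h1 : (B.var v, true) ∈ D B (B.next v false))
    (h2 : (B.var v, false) ∈ D B (B.next v true)) : t B v = v := by
  rw [t]; simp only [dif_neg (by simp [h] : ¬ B.isLeaf v = true)]
  rw [if_pos h1, if_pos h2]

lemma D_copy1 {v : Fin s} (h : B.isLeaf v = false)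
    (h1 : (B.var v, true) ∈ D B (B.next v false))
    (h2 : (B.var v, false) ∉ D B (B.next v true)) :
    D B v = D B (B.next v true) := by
  rw [D]; simp only [dif_neg (by simp [h] : ¬ B.isLeaf v = true)]
  rw [if_pos h1, if_neg h2]

lemma t_copy1 {v : Fin s} (h : B.isLeaf v = false)
    (h1 : (B.var v, true) ∈ D B (B.next v false))
    (h2 : (B.var v, false) ∉ D B (B.next v true)) :
    t B v = t B (B.next v true) := by
  rw [t]; simp only [dif_neg (by simp [h] : ¬ B.isLeaf v = true)]
  rw [if_pos h1, if_neg h2]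

lemma D_copy0 {v : Fin s} (h : B.isLeaf v = false)
    (h1 : (B.var v, true) ∉ D B (B.next v false)) :
    D B v = D B (B.next v false) := by
  rw [D]; simp only [dif_neg (by simp [h] : ¬ B.isLeaf v = true)]
  rw [if_neg h1]

lemma t_copy0 {v : Fin s} (h : B.isLeaf v = false)
    (h1 : (B.var v, true) ∉ D B (B.next v false)) :
    t B v = t B (B.next v false) := by
  rw [t]; simp only [dif_neg (by simp [h] : ¬ B.isLeaf v = true)]
  rw [if_neg h1]

lemma t_ge (v : Fin s) : v ≤ t B v := by
  by_cases h : B.isLeaf v = true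
  · rw [t_leaf B h]
  · replace h : B.isLeaf v = false := by simpa using h
    by_cases h1 : (B.var v, true) ∈ D B (B.next v false)
    · by_cases h2 : (B.var v, false) ∈ D B (B.next v true)
      · rw [t_res B h h1 h2]
      · rw [t_copy1 B h h1 h2]
        exact le_of_lt (lt_of_lt_of_le (B.acyclic v true h) (t_ge (B.next v true)))
    · rw [t_copy0 B h h1]
      exact le_of_lt (lt_of_lt_of_le (B.acyclic v false h) (t_ge (B.next v false)))
termination_by s - v
decreasing_by all_goals exact acy B v _ (by simp [h])

lemma D_t (v : Fin s) : D B (t B v) = D B v := by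
  by_cases h : B.isLeaf v = true
  · rw [t_leaf B h]
  · replace h : B.isLeaf v = false := by simpa using h
    by_cases h1 : (B.var v, true) ∈ D B (B.next v false)
    · by_cases h2 : (B.var v, false) ∈ D B (B.next v true)
      · rw [t_res B h h1 h2]
      · rw [t_copy1 B h h1 h2, D_copy1 B h h1 h2, D_t (B.next v true)]
    · rw [t_copy0 B h h1, D_copy0 B h h1, D_t (B.next v false)]
termination_by s - v
decreasing_by all_goals exact acy B v _ (by simp [h])

/-- at `t v`, either a leaf or a genuine resolution -/
lemma t_spec (v : Fin s) (hI : B.isLeaf (t B v) = false) :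
    (B.var (t B v), true) ∈ D B (B.next (t B v) false) ∧
    (B.var (t B v), false) ∈ D B (B.next (t B v) true) ∧
    D B (t B v) = (D B (B.next (t B v) false)).erase (B.var (t B v), true) ∪
      (D B (B.next (t B v) true)).erase (B.var (t B v), false) := by
  by_cases h : B.isLeaf v = true
  · rw [t_leaf B h] at hI; rw [h] at hI; exact absurd hI (by simp)
  · replace h : B.isLeaf v = false := by simpa using h
    by_cases h1 : (B.var v, true) ∈ D B (B.next v false)
    · by_cases h2 : (B.var v, false) ∈ D B (B.next v true)
      · rw [t_res B h h1 h2] at hI ⊢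
        exact ⟨h1, h2, D_res B h h1 h2⟩
      · rw [t_copy1 B h h1 h2] at hI ⊢
        exact t_spec (B.next v true) hI
    · rw [t_copy0 B h h1] at hI ⊢
      exact t_spec (B.next v false) hI
termination_by s - v
decreasing_by all_goals exact acy B v _ (by simp [h])

/-- chain from `v` to `t v` -/
lemma t_chain (v : Fin s) : ∃ m : List (Fin s),
    List.Chain' (E B) (v :: m) ∧ (v :: m).getLast (by simp) = t B v := by
  by_cases h : B.isLeaf v = true
  · exact ⟨[], List.isChain_singleton _, by rw [t_leaf B h]; rfl⟩
  · replace h : B.isLeaf v = false := by simpa using h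
    by_cases h1 : (B.var v, true) ∈ D B (B.next v false)
    · by_cases h2 : (B.var v, false) ∈ D B (B.next v true)
      · exact ⟨[], List.isChain_singleton _, by rw [t_res B h h1 h2]; rfl⟩
      · obtain ⟨m, hm, hl⟩ := t_chain (B.next v true)
        refine ⟨B.next v true :: m, List.isChain_cons_cons.mpr ⟨⟨h, true, rfl⟩, hm⟩, ?_⟩
        rw [t_copy1 B h h1 h2, List.getLast_cons (by simp), hl]
    · obtain ⟨m, hm, hl⟩ := t_chain (B.next v false)
      refine ⟨B.next v false :: m, List.isChain_cons_cons.mpr ⟨⟨h, false, rfl⟩, hm⟩, ?_⟩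
      rw [t_copy0 B h h1, List.getLast_cons (by simp), hl]
termination_by s - v
decreasing_by all_goals exact acy B v _ (by simp [h])

end BPaux

namespace BPaux2
open BPaux

variable {s : ℕ} (B : BranchingProgram s)

/-- reachable by some assignment -/
def Reach (v : Fin s) : Prop := ∃ σ k, (B.step σ)^[k] B.source = v

lemma reach_source : Reach B B.source := ⟨fun _ => true, 0, rfl⟩

lemma step_leaf {σ : ℕ → Bool} {u : Fin s} (h : B.isLeaf u = true) : B.step σ u = u := by
  simp [BranchingProgram.step, h]

lemma step_internal {σ : ℕ → Bool} {u : Fin s} (h : B.isLeaf u = false) :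
    B.step σ u = B.next u (σ (B.var u)) := by
  simp [BranchingProgram.step, h]

lemma it_absorb {σ : ℕ → Bool} {k m : ℕ} (hkm : k ≤ m)
    (h : B.isLeaf ((B.step σ)^[k] B.source) = true) :
    (B.step σ)^[m] B.source = (B.step σ)^[k] B.source := by
  obtain ⟨d, rfl⟩ := Nat.exists_eq_add_of_le hkm
  rw [Nat.add_comm, Function.iterate_add_apply]
  induction d with
  | zero => rfl
  | succ n ih => rw [Function.iterate_succ_apply', ih (by omega), step_leaf B h]

lemma internal_before {σ : ℕ → Bool} {k : ℕ} {v : Fin s}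
    (hk : (B.step σ)^[k] B.source = v) (hv : B.isLeaf v = false) :
    ∀ j < k, B.isLeaf ((B.step σ)^[j] B.source) = false := by
  intro j hj
  by_contra hL
  replace hL : B.isLeaf ((B.step σ)^[j] B.source) = true := by simpa using hL
  have := it_absorb B (le_of_lt hj) hL
  rw [hk] at this
  rw [this] at hv; rw [hL] at hv; exact Bool.false_ne_true hv.symm

lemma exists_leaf (σ : ℕ → Bool) : ∃ j ≤ s, B.isLeaf ((B.step σ)^[j] B.source) = true := by
  by_contra hc
  push_neg at hc
  have key : ∀ j ≤ s, j ≤ ((B.step σ)^[j] B.source : ℕ) := by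
    intro j hj
    induction j with
    | zero => exact Nat.zero_le _
    | succ n ih =>
      have h1 := ih (le_of_lt (Nat.lt_of_succ_le hj))
      have h2 : B.isLeaf ((B.step σ)^[n] B.source) = false := by
        simpa using hc n (le_of_lt (Nat.lt_of_succ_le hj))
      rw [Function.iterate_succ_apply', step_internal B h2]
      have := B.acyclic ((B.step σ)^[n] B.source) (σ (B.var ((B.step σ)^[n] B.source))) h2
      omega
  have := key s le_rfl
  have := ((B.step σ)^[s] B.source).isLt
  omega

lemma run_eq {σ : ℕ → Bool} {k : ℕ} {v : Fin s}
    (hk : (B.step σ)^[k] B.source = v) (hv : B.isLeaf v = true) : B.run σ = v := by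
  obtain ⟨j, hjs, hj⟩ := exists_leaf B σ
  rcases le_or_gt k s with h | h
  · rw [BranchingProgram.run, it_absorb B h (hk ▸ hv), hk]
  · have h1 : (B.step σ)^[k] B.source = (B.step σ)^[j] B.source :=
      it_absorb B (le_trans hjs (le_of_lt h)) hj
    rw [BranchingProgram.run, it_absorb B hjs hj, ← h1, hk]

/-- the iterate path is a source path -/
lemma src_path {σ : ℕ → Bool} {k : ℕ} {v : Fin s}
    (hk : (B.step σ)^[k] B.source = v) (hv : B.isLeaf v = false) :
    B.IsSourcePath ((List.range (k + 1)).map (fun j => (B.step σ)^[j] B.source)) := by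
  constructor
  · rw [List.head?_map]
    have : (List.range (k+1)).head? = some 0 := by
      rw [List.range_succ_eq_map]; rfl
    rw [this]; rfl
  · show List.IsChain _ _; rw [List.isChain_map]
    refine (List.isChain_range_succ _ _).mpr ?_
    intro i hi
    have hint : B.isLeaf ((B.step σ)^[i] B.source) = false := by
      rcases lt_or_eq_of_le (Nat.le_of_lt_succ (Nat.lt_succ_of_lt hi)) with h | h
      · exact internal_before B hk hv i (by omega)
      · rw [h, hk]; exact hv
    exact ⟨hint, σ (B.var _), by rw [Function.iterate_succ_apply', step_internal B hint]⟩

/-- read-once: variables queried along the run are pairwise distinct -/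
lemma vars_ne (hro : B.ReadOnce) {σ : ℕ → Bool} {k : ℕ} {v : Fin s}
    (hk : (B.step σ)^[k] B.source = v) (hv : B.isLeaf v = false)
    {j : ℕ} (hj : j < k) : B.var ((B.step σ)^[j] B.source) ≠ B.var v := by
  have hsp := src_path B hk hv
  have hnd := hro _ hsp
  set P := (List.range (k + 1)).map (fun j => (B.step σ)^[j] B.source) with hP
  have hall : ∀ u ∈ P, B.isLeaf u = false := by
    intro u hu
    rw [hP, List.mem_map] at hu
    obtain ⟨i, hi, rfl⟩ := hu
    rw [List.mem_range] at hi
    rcases lt_or_eq_of_le (Nat.le_of_lt_succ hi) with h | h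
    · exact internal_before B hk hv i h
    · rw [h, hk]; exact hv
  have hfil : P.filter (fun u => !B.isLeaf u) = P := by
    apply List.filter_eq_self.mpr
    intro u hu; simp [hall u hu]
  rw [hfil] at hnd
  have hinj := List.inj_on_of_nodup_map hnd
  intro hEq
  have h1 : (B.step σ)^[j] B.source ∈ P := by
    rw [hP, List.mem_map]; exact ⟨j, by rw [List.mem_range]; omega, rfl⟩
  have h2 : v ∈ P := by
    rw [hP, List.mem_map]; exact ⟨k, by rw [List.mem_range]; omega, hk⟩
  have hlt : ((B.step σ)^[j] B.source : ℕ) < ((B.step σ)^[k] B.source : ℕ) := by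
    have : ∀ d : ℕ, 0 < d → j + d ≤ k →
        ((B.step σ)^[j] B.source : ℕ) < ((B.step σ)^[j+d] B.source : ℕ) := by
      intro d hd hdk
      induction d with
      | zero => omega
      | succ n ih =>
        rw [show j + (n+1) = (j+n)+1 by omega]
        have hint : B.isLeaf ((B.step σ)^[j+n] B.source) = false := by
          rcases Nat.lt_or_ge (j+n) k with h | h
          · exact internal_before B hk hv _ h
          · have : j + n = k := by omega
            rw [this, hk]; exact hv
        have hstep : ((B.step σ)^[j+n] B.source : ℕ) < ((B.step σ)^[j+n+1] B.source : ℕ) := by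
          rw [Function.iterate_succ_apply', step_internal B hint]
          exact B.acyclic _ _ hint
        rcases Nat.eq_zero_or_pos n with h0 | h0
        · subst h0; simpa using hstep
        · have := ih h0 (by omega)
          omega
    have := this (k - j) (by omega) (by omega)
    rwa [Nat.add_sub_cancel' (le_of_lt hj)] at this
  have heq2 : (B.step σ)^[j] B.source = v := hinj h1 h2 hEq
  rw [heq2, hk] at hlt
  omega

end BPaux2

namespace BPaux3
open BPaux BPaux2

variable {s : ℕ} (B : BranchingProgram s)

/-- flipping the variable queried at `v` does not change the path to `v` -/
lemma flip (hro : B.ReadOnce) {σ : ℕ → Bool} {k : ℕ} {v : Fin s}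
    (hk : (B.step σ)^[k] B.source = v) (hv : B.isLeaf v = false) (c : Bool) :
    (B.step (Function.update σ (B.var v) c))^[k] B.source = v := by
  set σ' := Function.update σ (B.var v) c with hσ'
  have key : ∀ j ≤ k, (B.step σ')^[j] B.source = (B.step σ)^[j] B.source := by
    intro j hj
    induction j with
    | zero => rfl
    | succ n ih =>
      have hn := ih (by omega)
      have hint : B.isLeaf ((B.step σ)^[n] B.source) = false :=
        internal_before B hk hv n (by omega)
      rw [Function.iterate_succ_apply', Function.iterate_succ_apply', hn,
        step_internal B hint, step_internal B hint]
      congr 1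
      rw [hσ', Function.update_of_ne (vars_ne B hro hk hv (by omega))]
  rw [key k le_rfl, hk]

lemma reach_next (hro : B.ReadOnce) {v : Fin s} (hR : Reach B v)
    (hv : B.isLeaf v = false) (b : Bool) : Reach B (B.next v b) := by
  obtain ⟨σ, k, hk⟩ := hR
  refine ⟨Function.update σ (B.var v) b, k + 1, ?_⟩
  rw [Function.iterate_succ_apply', flip B hro hk hv b, step_internal B hv,
    Function.update_self]

lemma reach_t (hro : B.ReadOnce) {v : Fin s} (hR : Reach B v) : Reach B (t B v) := by
  by_cases h : B.isLeaf v = true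
  · rw [t_leaf B h]; exact hR
  · replace h : B.isLeaf v = false := by simpa using h
    by_cases h1 : (B.var v, true) ∈ D B (B.next v false)
    · by_cases h2 : (B.var v, false) ∈ D B (B.next v true)
      · rw [t_res B h h1 h2]; exact hR
      · rw [t_copy1 B h h1 h2]; exact reach_t hro (reach_next B hro hR h true)
    · rw [t_copy0 B h h1]; exact reach_t hro (reach_next B hro hR h false)
termination_by s - v
decreasing_by all_goals exact acy B v _ (by simp [h])

/-- the main semantic invariant -/
lemma invariant {φ : CNF} (hro : B.ReadOnce) (hsolve : B.SolvesSearch φ)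
    (v : Fin s) : ∀ (σ : ℕ → Bool) (k : ℕ), (B.step σ)^[k] B.source = v →
    Falsifies σ (D B v) := by
  intro σ k hk
  by_cases hL : B.isLeaf v = true
  · rw [D_leaf B hL]
    have hr := run_eq B hk hL
    have := (hsolve σ).2.2
    rwa [hr] at this
  · replace hL : B.isLeaf v = false := by simpa using hL
    set x := B.var v with hx
    have h1 : (B.step σ)^[k+1] B.source = B.next v (σ x) := by
      rw [Function.iterate_succ_apply', hk, step_internal B hL]
    have Hb : Falsifies σ (D B (B.next v (σ x))) := invariant hro hsolve _ σ (k+1) h1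
    set σ' := Function.update σ x (!(σ x)) with hσ'
    have h2 : (B.step σ')^[k] B.source = v := flip B hro hk hL (!(σ x))
    have h3 : (B.step σ')^[k+1] B.source = B.next v (!(σ x)) := by
      rw [Function.iterate_succ_apply', h2, step_internal B hL, ← hx, hσ',
        Function.update_self]
    have Hb' : Falsifies σ' (D B (B.next v (!(σ x)))) := invariant hro hsolve _ σ' (k+1) h3
    have hxb' : (x, !(σ x)) ∉ D B (B.next v (!(σ x))) := fun hmem => by
      have := Hb' (x, !(σ x)) hmem
      rw [hσ'] at this
      simp [Function.update_self] at this
    have key' : ∀ l ∈ D B (B.next v (!(σ x))), l ≠ (x, σ x) → σ l.1 ≠ l.2 := by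
      intro l hl hne
      by_cases hlx : l.1 = x
      · exfalso
        have : l.2 = σ x ∨ l.2 = !(σ x) := by cases l.2 <;> cases (σ x) <;> simp
        rcases this with h | h
        · exact hne (Prod.ext_iff.mpr ⟨hlx, h⟩)
        · exact hxb' (by rw [show ((x, !(σ x)) : ℕ × Bool) = l from (Prod.ext_iff.mpr ⟨hlx.symm, h.symm⟩)]; exact hl)
      · have := Hb' l hl
        rwa [hσ', Function.update_of_ne hlx] at this
    have factT : ∀ l ∈ D B (B.next v true), l ≠ (x, false) → σ l.1 ≠ l.2 := by
      intro l hl hne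
      cases hbv : σ x with
      | true => rw [hbv] at Hb; exact Hb l hl
      | false =>
        rw [hbv] at key'
        exact key' l (by simpa using hl) hne
    have factF : ∀ l ∈ D B (B.next v false), l ≠ (x, true) → σ l.1 ≠ l.2 := by
      intro l hl hne
      cases hbv : σ x with
      | false => rw [hbv] at Hb; exact Hb l hl
      | true =>
        rw [hbv] at key'
        exact key' l (by simpa using hl) hne
    by_cases hm1 : (x, true) ∈ D B (B.next v false)
    · by_cases hm2 : (x, false) ∈ D B (B.next v true)
      · rw [D_res B hL hm1 hm2]
        intro l hl
        rw [Finset.mem_union, Finset.mem_erase, Finset.mem_erase] at hl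
        rcases hl with ⟨hne, hl⟩ | ⟨hne, hl⟩
        · exact factF l hl hne
        · exact factT l hl hne
      · rw [D_copy1 B hL hm1 hm2]
        intro l hl
        exact factT l hl (fun hEq => hm2 (hEq ▸ hl))
    · rw [D_copy0 B hL hm1]
      intro l hl
      exact factF l hl (fun hEq => hm1 (hEq ▸ hl))
termination_by s - v
decreasing_by all_goals { first
  | exact acy B v _ (by simp [hL])
  | exact acy B v _ (by simp [hL]) }

lemma D_source_empty {φ : CNF} (hro : B.ReadOnce) (hsolve : B.SolvesSearch φ) :
    D B B.source = ∅ := by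
  rw [Finset.eq_empty_iff_forall_notMem]
  intro l hl
  have := invariant B hro hsolve B.source (fun _ => l.2) 0 rfl l hl
  exact this rfl

lemma reach_leaf_clause {φ : CNF} (hsolve : B.SolvesSearch φ) {v : Fin s}
    (hR : Reach B v) (hv : B.isLeaf v = true) : B.leafClause v ∈ φ := by
  obtain ⟨σ, k, hk⟩ := hR
  have hr := run_eq B hk hv
  have := (hsolve σ).2.1
  rwa [hr] at this

end BPaux3

namespace BPaux4
open BPaux BPaux2 BPaux3

variable {s : ℕ} (B : BranchingProgram s)

/-- index reversal -/
def rev (i : Fin s) : Fin s := ⟨s - 1 - i.val, by have := i.isLt; omega⟩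

lemma rev_rev (i : Fin s) : rev (rev i) = i := by
  apply Fin.ext; simp only [rev]; have := i.isLt; omega

lemma rev_lt {u w : Fin s} (h : u < w) : rev w < rev u := by
  simp only [rev, Fin.lt_def] at *; have := w.isLt; omega

lemma internal_of_t_internal {v : Fin s} (h : B.isLeaf (t B v) = false) :
    B.isLeaf v = false := by
  by_contra hc
  replace hc : B.isLeaf v = true := by simpa using hc
  rw [t_leaf B hc] at h; rw [hc] at h; simp at h

/-- reachability gives an explicit source path -/
lemma reach_spath {v : Fin s} (hR : Reach B v) (hv : B.isLeaf v = false) :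
    ∃ P, B.IsSourcePath P ∧ P.getLast? = some v := by
  obtain ⟨σ, k, hk⟩ := hR
  refine ⟨(List.range (k + 1)).map (fun j => (B.step σ)^[j] B.source), src_path B hk hv, ?_⟩
  rw [List.range_succ, List.map_append]
  simp [hk]

/-- extending a source path by a chain -/
lemma extend {P : List (Fin s)} {u : Fin s} (hP : B.IsSourcePath P)
    (hlast : P.getLast? = some u) {m : List (Fin s)}
    (hm : List.Chain' (E B) (u :: m)) :
    B.IsSourcePath (P ++ m) ∧
      (P ++ m).getLast? = some ((u :: m).getLast (by simp)) ∧
      (∀ x ∈ u :: m, x ∈ P ++ m) := by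
  have huP : u ∈ P := by
    obtain ⟨h, h2⟩ := List.mem_getLast?_eq_getLast hlast
    rw [h2]; exact List.getLast_mem h
  refine ⟨⟨?_, ?_⟩, ?_, ?_⟩
  · rw [List.head?_append_of_ne_nil]
    · exact hP.1
    · intro hc; rw [hc] at hlast; simp at hlast
  · apply List.IsChain.append hP.2 (List.IsChain.tail hm)
    intro x hx y hy
    rw [hlast, Option.mem_some_iff] at hx
    subst hx
    cases m with
    | nil => simp at hy
    | cons hd tl =>
      simp at hy
      subst hy
      exact (List.isChain_cons_cons.mp hm).1
  · cases m with
    | nil => simpa using hlast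
    | cons hd tl =>
      rw [List.getLast?_append_of_ne_nil _ (by simp)]
      rw [List.getLast_cons (by simp)]
      exact List.getLast?_eq_getLast_of_ne_nil _
  · intro x hx
    rcases List.mem_cons.mp hx with rfl | hx
    · exact List.mem_append_left _ huP
    · exact List.mem_append_right _ hx

lemma head?_append_of_ne_nil_check : True := trivial

/-- the step relation on nodes induced by the refutation -/
def Step (u w : Fin s) : Prop :=
  B.isLeaf (t B u) = false ∧ (w = B.next (t B u) false ∨ w = B.next (t B u) true)

lemma step_E {u w : Fin s} (h : Step B u w) : E B (t B u) w := by
  rcases h.2 with h2 | h2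
  · exact ⟨h.1, false, h2⟩
  · exact ⟨h.1, true, h2⟩

/-- master lemma: a single source path covering all `t`s of a `Step`-chain -/
lemma master : ∀ (w : List (Fin s)) (u : Fin s) (P : List (Fin s)),
    List.Chain' (Step B) (u :: w) → B.IsSourcePath P → P.getLast? = some u →
    ∃ Q, B.IsSourcePath Q ∧ (∀ x ∈ P, x ∈ Q) ∧ ∀ z ∈ u :: w, t B z ∈ Q := by
  intro w
  induction w with
  | nil =>
    intro u P _ hP hlast
    obtain ⟨m, hm, hml⟩ := t_chain B u
    obtain ⟨hQ, hQl, hQm⟩ := extend B hP hlast hm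
    refine ⟨P ++ m, hQ, fun x hx => List.mem_append_left _ hx, ?_⟩
    intro z hz
    rcases List.mem_cons.mp hz with rfl | hz
    · rw [← hml]; exact hQm _ (List.getLast_mem _)
    · simp at hz
  | cons z w' ih =>
    intro u P hch hP hlast
    have hsz : Step B u z := (List.isChain_cons_cons.mp hch).1
    obtain ⟨m, hm, hml⟩ := t_chain B u
    -- chain u :: (m ++ [z])
    have hchain : List.Chain' (E B) (u :: (m ++ [z])) := by
      have h1 : List.Chain' (E B) ((u :: m) ++ [z]) := by
        apply List.IsChain.append hm (List.isChain_singleton z)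
        intro x hx y hy
        rw [List.getLast?_eq_getLast_of_ne_nil (by simp), Option.mem_some_iff] at hx
        simp at hy
        subst hx hy
        rw [hml]
        exact step_E B hsz
      simpa using h1
    obtain ⟨hQ, hQl, hQm⟩ := extend B hP hlast hchain
    have hlast' : (P ++ (m ++ [z])).getLast? = some z := by
      rw [hQl]
      congr 1
      rw [List.getLast_cons (by simp)]
      simp
    obtain ⟨Q, hQ2, hQ2m, hQ2t⟩ := ih z (P ++ (m ++ [z])) (List.isChain_cons_cons.mp hch).2 hQ hlast'
    refine ⟨Q, hQ2, fun x hx => hQ2m _ (List.mem_append_left _ hx), ?_⟩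
    intro y hy
    rcases List.mem_cons.mp hy with heq | hy
    · -- t u ∈ Q : t u = last of (u::m) which is in P ++ (m ++ [z])
      rw [heq]
      apply hQ2m
      rw [← hml]
      have : (u :: m).getLast (by simp) ∈ u :: m := List.getLast_mem _
      have h2 : ∀ a ∈ u :: m, a ∈ P ++ (m ++ [z]) := by
        intro a ha
        apply hQm
        rcases List.mem_cons.mp ha with h | h
        · exact List.mem_cons.mpr (Or.inl h)
        · exact List.mem_cons.mpr (Or.inr (List.mem_append_left _ h))
      exact h2 _ this
    · exact hQ2t _ hy

end BPaux4

namespace BPaux5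
open BPaux BPaux2 BPaux3 BPaux4

open Classical in
/-- the regular resolution refutation extracted from the branching program -/
noncomputable def mkR {s : ℕ} (B : BranchingProgram s) {φ : CNF} (hro : B.ReadOnce)
    (hsolve : B.SolvesSearch φ) (C₀ : Clause) (hC₀ : C₀ ∈ φ) : ResRefutation φ :=
  { size := s
    clause := fun i => if Reach B (rev i) then D B (rev i) else C₀
    isAx := fun i => if Reach B (rev i) then B.isLeaf (t B (rev i)) else true
    prem1 := fun i => rev (B.next (t B (rev i)) false)
    prem2 := fun i => rev (B.next (t B (rev i)) true)
    resVar := fun i => B.var (t B (rev i))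
    ax_mem := by
      intro i h
      by_cases hR : Reach B (rev i)
      · rw [if_pos hR] at h ⊢
        rw [← D_t B (rev i), D_leaf B h]
        exact reach_leaf_clause B hsolve (reach_t B hro hR) h
      · rw [if_neg hR]; exact hC₀
    prem1_lt := by
      intro i h
      by_cases hR : Reach B (rev i)
      · rw [if_pos hR] at h
        have h1 := t_ge B (rev i)
        have h2 := B.acyclic _ false h
        have := rev_lt (lt_of_le_of_lt h1 h2)
        rwa [rev_rev] at this
      · rw [if_neg hR] at h; simp at h
    prem2_lt := by
      intro i h
      by_cases hR : Reach B (rev i)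
      · rw [if_pos hR] at h
        have h1 := t_ge B (rev i)
        have h2 := B.acyclic _ true h
        have := rev_lt (lt_of_le_of_lt h1 h2)
        rwa [rev_rev] at this
      · rw [if_neg hR] at h; simp at h
    res_pos := by
      intro i h
      by_cases hR : Reach B (rev i)
      · rw [if_pos hR] at h
        have hRn : Reach B (B.next (t B (rev i)) false) :=
          reach_next B hro (reach_t B hro hR) h false
        rw [rev_rev, if_pos hRn]
        exact (t_spec B (rev i) h).1
      · rw [if_neg hR] at h; simp at h
    res_neg := by
      intro i h
      by_cases hR : Reach B (rev i)
      · rw [if_pos hR] at h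
        have hRn : Reach B (B.next (t B (rev i)) true) :=
          reach_next B hro (reach_t B hro hR) h true
        rw [rev_rev, if_pos hRn]
        exact (t_spec B (rev i) h).2.1
      · rw [if_neg hR] at h; simp at h
    res_eq := by
      intro i h
      by_cases hR : Reach B (rev i)
      · rw [if_pos hR] at h
        have hR0 : Reach B (B.next (t B (rev i)) false) :=
          reach_next B hro (reach_t B hro hR) h false
        have hR1 : Reach B (B.next (t B (rev i)) true) :=
          reach_next B hro (reach_t B hro hR) h true
        rw [if_pos hR, rev_rev, rev_rev, if_pos hR0, if_pos hR1]
        rw [← D_t B (rev i)]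
        exact (t_spec B (rev i) h).2.2
      · rw [if_neg hR] at h; simp at h
    refutes := by
      refine ⟨rev B.source, ?_⟩
      rw [rev_rev, if_pos (reach_source B)]
      exact D_source_empty B hro hsolve }

lemma mkR_regular {s : ℕ} (B : BranchingProgram s) {φ : CNF} (hro : B.ReadOnce)
    (hsolve : B.SolvesSearch φ) (C₀ : Clause) (hC₀ : C₀ ∈ φ) :
    (mkR B hro hsolve C₀ hC₀).Regular := by
  classical
  intro l hl
  have hax_iff : ∀ i : Fin s, (mkR B hro hsolve C₀ hC₀).isAx i = false ↔
      (Reach B (rev i) ∧ B.isLeaf (t B (rev i)) = false) := by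
    intro i
    show (if Reach B (rev i) then B.isLeaf (t B (rev i)) else true) = false ↔ _
    by_cases hR : Reach B (rev i)
    · rw [if_pos hR]; simp [hR]
    · rw [if_neg hR]; simp [hR]
  obtain _ | ⟨i, _ | ⟨j, w⟩⟩ := l
  · simp
  · by_cases h : (mkR B hro hsolve C₀ hC₀).isAx i <;> simp [List.filter, h]
  · have hch : List.Chain' (fun u v : Fin s =>
        (mkR B hro hsolve C₀ hC₀).isAx u = false ∧
        (v = rev (B.next (t B (rev u)) false) ∨ v = rev (B.next (t B (rev u)) true)))
        (i :: j :: w) := hl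
    have hchS : List.Chain' (fun a b : Fin s => Step B (rev a) (rev b)) (i :: j :: w) := by
      apply hch.imp
      intro a b ⟨h1, h2⟩
      have := (hax_iff a).mp h1
      refine ⟨this.2, ?_⟩
      rcases h2 with rfl | rfl
      · left; rw [rev_rev]
      · right; rw [rev_rev]
    have hchM : List.Chain' (Step B) ((i :: j :: w).map rev) := (List.isChain_map rev).mpr hchS
    have hhead : (mkR B hro hsolve C₀ hC₀).isAx i = false := (List.isChain_cons_cons.mp hch).1.1
    have hReach : Reach B (rev i) := ((hax_iff i).mp hhead).1
    have hInt : B.isLeaf (rev i) = false :=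
      internal_of_t_internal B ((hax_iff i).mp hhead).2
    obtain ⟨P, hP, hPl⟩ := reach_spath B hReach hInt
    have hchM' : List.Chain' (Step B) (rev i :: (j :: w).map rev) := by
      exact hchM
    obtain ⟨Q, hQsp, _, hQt⟩ := master B ((j :: w).map rev) (rev i) P hchM' hP hPl
    have hQt' : ∀ z ∈ (i :: j :: w).map rev, t B z ∈ Q := by
      intro z hz
      apply hQt
      exact hz
    have hnodup := hro Q hQsp
    have hinj := List.inj_on_of_nodup_map hnodup
    haveI : IsTrans (Fin s) (fun a b => ((t B (rev a) : ℕ) < (t B (rev b) : ℕ))) :=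
      ⟨fun _ _ _ h1 h2 => lt_trans h1 h2⟩
    have hmono : (i :: j :: w).Pairwise
        (fun a b => ((t B (rev a) : ℕ) < (t B (rev b) : ℕ))) := by
      apply List.isChain_iff_pairwise.mp
      apply hch.imp
      intro a b ⟨h1, h2⟩
      have hi := (hax_iff a).mp h1
      have hlt : (t B (rev a) : ℕ) < (rev b : ℕ) := by
        rcases h2 with rfl | rfl
        · rw [rev_rev]; exact B.acyclic _ false hi.2
        · rw [rev_rev]; exact B.acyclic _ true hi.2
      have h3 : ((rev b : Fin s) : ℕ) ≤ (t B (rev b) : ℕ) := t_ge B (rev b)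
      omega
    have hpw : ((i :: j :: w).filter
          (fun v => !(mkR B hro hsolve C₀ hC₀).isAx v)).Pairwise
        (fun a b => B.var (t B (rev a)) ≠ B.var (t B (rev b))) := by
      apply List.Pairwise.imp_of_mem ?_ (hmono.filter _)
      intro a b ha hb hlt hEq
      have haax : (mkR B hro hsolve C₀ hC₀).isAx a = false := by
        have := (List.mem_filter.mp ha).2; simpa using this
      have hbax : (mkR B hro hsolve C₀ hC₀).isAx b = false := by
        have := (List.mem_filter.mp hb).2; simpa using this
      have hta : t B (rev a) ∈ Q := hQt' _ (List.mem_map_of_mem (f := rev) (List.mem_filter.mp ha).1)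
      have htb : t B (rev b) ∈ Q := hQt' _ (List.mem_map_of_mem (f := rev) (List.mem_filter.mp hb).1)
      have hIa : B.isLeaf (t B (rev a)) = false := ((hax_iff a).mp haax).2
      have hIb : B.isLeaf (t B (rev b)) = false := ((hax_iff b).mp hbax).2
      have hma : t B (rev a) ∈ Q.filter (fun v => !B.isLeaf v) :=
        List.mem_filter.mpr ⟨hta, by simp [hIa]⟩
      have hmb : t B (rev b) ∈ Q.filter (fun v => !B.isLeaf v) :=
        List.mem_filter.mpr ⟨htb, by simp [hIb]⟩
      have := hinj hma hmb hEq
      rw [this] at hlt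
      omega
    show (((i :: j :: w).filter (fun v => !(mkR B hro hsolve C₀ hC₀).isAx v)).map
      (fun i => B.var (t B (rev i)))).Nodup
    exact List.Pairwise.map _ (fun a b h => h) hpw

end BPaux5


/-- From a read-once branching program of size `s` solving conflict clause search for an
unsatisfiable CNF `φ`, one gets a regular resolution refutation of `φ` of size at most `s`. -/
theorem readonce_bp_to_regular_resolution (φ : CNF) (hφ : Unsat φ)
    (s : ℕ) (B : BranchingProgram s) (hro : B.ReadOnce) (hsolve : B.SolvesSearch φ) :
    ∃ R : ResRefutation φ, R.Regular ∧ R.size ≤ s := by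
  obtain ⟨C₀, hC₀, -⟩ := hφ (fun _ => true)
  exact ⟨BPaux5.mkR B hro hsolve C₀ hC₀,
    BPaux5.mkR_regular B hro hsolve C₀ hC₀, le_rfl⟩
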